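/- Let q be a power of 2, n | q−1, and α ∈ F_q a primitive n-th root of unity. Let D be a cyclic code of length n over F_q with complete defining set Z(D), let p_1, p_2, p_3 be positive divisors of n, and let l_1, l_2, l_3 be integers. If Z(D) contains every n-th root of unity that belongs to an odd number of the cosets α^{l_1}G_{p_1}, α^{l_2}G_{p_2}, α^{l_3}G_{p_3}, then the locality r of D satisfies r ≤ p_1 + p_2 + p_3 − 2·gcd(p_1,p_2,l_1−l_2) − 2·gcd(p_1,p_3,l_1−l_3) − 2·gcd(p_2,p_3,l_2−l_3) + 4·gcd(p_1,p_2,p_3,l_1−l_2,l_2−l_3) − 1. -/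

import Mathlib

open scoped BigOperators

namespace LRC

/-- Hamming weight of a vector. -/
noncomputable def hwt {n : ℕ} {F : Type*} [Zero F] (c : Fin n → F) : ℕ :=
  Nat.card {i : Fin n // c i ≠ 0}

/-- A linear code is cyclic if it is closed under the cyclic shift of coordinates. -/
def IsCyclicCode {n : ℕ} [NeZero n] {F : Type*} [Field F] (C : Submodule F (Fin n → F)) : Prop :=
  ∀ c ∈ C, (fun i : Fin n => c (i - 1)) ∈ C

/-- `A` is a recovery set for coordinate `i` of the code `C`. -/
def IsRecoverySet {n : ℕ} {F : Type*} [Field F] (C : Submodule F (Fin n → F)) (i : Fin n)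
    (A : Finset (Fin n)) : Prop :=
  i ∉ A ∧ ∃ φ : ((j : A) → F) → F, ∀ c ∈ C, c i = φ (fun j => c j)

/-- The code `C` has locality `r`. -/
def HasLocality {n : ℕ} {F : Type*} [Field F] (C : Submodule F (Fin n → F)) (r : ℕ) : Prop :=
  ∀ i : Fin n, ∃ A : Finset (Fin n), A.card ≤ r ∧ IsRecoverySet C i A

/-- Complete defining set of zeros of a cyclic code (locator field = symbol field). -/
def definingSet {n : ℕ} {F : Type*} [Field F] (C : Submodule F (Fin n → F)) : Set F :=
  {β | β ^ n = 1 ∧ ∀ c ∈ C, ∑ j : Fin n, c j * β ^ (j : ℕ) = 0}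

/-- Complete defining set of zeros of a cyclic code in an extension (locator) field `K`. -/
def definingSetExt (n : ℕ) {F K : Type*} [Field F] [Field K] [Algebra F K]
    (C : Submodule F (Fin n → F)) : Set K :=
  {β | β ^ n = 1 ∧ ∀ c ∈ C, ∑ j : Fin n, algebraMap F K (c j) * β ^ (j : ℕ) = 0}

/-- The cyclic code with a given set of zeros. -/
def codeOfZeros (n : ℕ) {F : Type*} [Field F] (Z : Set F) : Submodule F (Fin n → F) where
  carrier := {c | ∀ β ∈ Z, ∑ j : Fin n, c j * β ^ (j : ℕ) = 0}
  add_mem' := by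
    intro a b ha hb β hβ
    have h1 := ha β hβ
    have h2 := hb β hβ
    calc ∑ j : Fin n, (a + b) j * β ^ (j : ℕ)
        = (∑ j : Fin n, a j * β ^ (j : ℕ)) + ∑ j : Fin n, b j * β ^ (j : ℕ) := by
          rw [← Finset.sum_add_distrib]
          exact Finset.sum_congr rfl (by intro j _; simp [add_mul])
      _ = 0 := by rw [h1, h2, add_zero]
  zero_mem' := by intro β hβ; simp
  smul_mem' := by
    intro t a ha β hβ
    have h1 := ha β hβ
    calc ∑ j : Fin n, (t • a) j * β ^ (j : ℕ)
        = t * ∑ j : Fin n, a j * β ^ (j : ℕ) := by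
          rw [Finset.mul_sum]
          exact Finset.sum_congr rfl (by intro j _; simp [mul_assoc])
      _ = 0 := by rw [h1, mul_zero]

/-- Minimum distance: least Hamming weight of a nonzero codeword. -/
noncomputable def minDist {n : ℕ} {F : Type*} [Field F] (C : Submodule F (Fin n → F)) : ℕ :=
  sInf {w | ∃ c ∈ C, c ≠ 0 ∧ hwt c = w}

/-- The dual code under the standard bilinear form. -/
def dualCode {n : ℕ} {F : Type*} [Field F] (C : Submodule F (Fin n → F)) :
    Submodule F (Fin n → F) where
  carrier := {y | ∀ c ∈ C, ∑ i : Fin n, c i * y i = 0}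
  add_mem' := by
    intro a b ha hb c hc
    have h1 := ha c hc
    have h2 := hb c hc
    calc ∑ i : Fin n, c i * (a + b) i
        = (∑ i : Fin n, c i * a i) + ∑ i : Fin n, c i * b i := by
          rw [← Finset.sum_add_distrib]
          exact Finset.sum_congr rfl (by intro j _; simp [mul_add])
      _ = 0 := by rw [h1, h2, add_zero]
  zero_mem' := by intro c hc; simp
  smul_mem' := by
    intro t a ha c hc
    have h1 := ha c hc
    calc ∑ i : Fin n, c i * (t • a) i
        = t * ∑ i : Fin n, c i * a i := by
          rw [Finset.mul_sum]
          exact Finset.sum_congr rfl (by intro j _; simp [mul_assoc]; ring)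
      _ = 0 := by rw [h1, mul_zero]



open scoped Classical

/-- The coset `α^l G_m` of the subgroup `G_m = {α^{jm}}` of the n-th roots of unity. -/
def coset {F : Type*} [Field F] (α : F) (n : ℕ) (l : ℤ) (m : ℕ) : Set F :=
  {β | ∃ j : ℕ, j < n / m ∧ β = α ^ (l + (j : ℤ) * m)}


open Finset

section Aux
variable {F : Type*} [Field F] {n : ℕ} {α : F}

lemma aux_card_mult {L g : ℕ} (hL : 0 < L) (h : L ∣ g) :
    ((Finset.range g).filter (fun s => L ∣ s)).card = g / L := by
  classical
  have himg : (Finset.range g).filter (fun s => L ∣ s)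
      = (Finset.range (g/L)).image (fun k => L * k) := by
    ext s
    simp only [mem_filter, mem_range, mem_image]
    constructor
    · rintro ⟨hs, k, rfl⟩
      exact ⟨k, (Nat.lt_div_iff_mul_lt' h k).2 hs, rfl⟩
    · rintro ⟨k, hk, rfl⟩
      exact ⟨(Nat.lt_div_iff_mul_lt' h k).1 hk, k, rfl⟩
  rw [himg, Finset.card_image_of_injective _ (mul_right_injective₀ hL.ne'), Finset.card_range]

lemma aux_dvd_mul_iff_div_gcd_dvd {g x s : ℕ} (hg : 0 < g) :
    g ∣ x * s ↔ (g / Nat.gcd g x) ∣ s := by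
  rw [Nat.div_dvd_iff_dvd_mul (Nat.gcd_dvd_left g x) (Nat.gcd_pos_of_pos_left x hg)]
  constructor
  · intro hx
    have : g ∣ Nat.gcd (g * s) (x * s) := Nat.dvd_gcd (Dvd.intro s rfl) hx
    rwa [Nat.gcd_mul_right] at this
  · intro hx
    exact hx.trans (Nat.mul_dvd_mul_right (Nat.gcd_dvd_right g x) s)

lemma aux_countLemma {n g : ℕ} (hn : 0 < n) (hg : 0 < g) (hgn : g ∣ n) (d₁ d₂ : ℤ) :
    ((Finset.range n).filter
      (fun v => (n/g ∣ v) ∧ ((n:ℤ) ∣ d₁ * v) ∧ ((n:ℤ) ∣ d₂ * v))).card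
      = Nat.gcd (Nat.gcd g d₁.natAbs) d₂.natAbs := by
  classical
  set m := n / g with hm
  have hmg : m * g = n := Nat.div_mul_cancel hgn
  have hm0 : 0 < m := Nat.div_pos (Nat.le_of_dvd hn hgn) hg
  set a₁ := d₁.natAbs with ha₁
  set a₂ := d₂.natAbs with ha₂
  set w := Nat.gcd g (Nat.gcd a₁ a₂) with hw
  have key : ∀ (d : ℤ) (s : ℕ), ((n:ℤ) ∣ d * ((m*s : ℕ) : ℤ)) ↔ g ∣ d.natAbs * s := by
    intro d s
    rw [← Int.natAbs_dvd_natAbs, Int.natAbs_mul, Int.natAbs_natCast, Int.natAbs_natCast]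
    have h1 : d.natAbs * (m * s) = m * (d.natAbs * s) := by ring
    rw [h1, ← hmg]
    exact Nat.mul_dvd_mul_iff_left hm0
  have himg : (Finset.range n).filter
        (fun v => (m ∣ v) ∧ ((n:ℤ) ∣ d₁ * v) ∧ ((n:ℤ) ∣ d₂ * v))
      = ((Finset.range g).filter (fun s => (g/w) ∣ s)).image (fun s => m * s) := by
    ext v
    simp only [mem_filter, mem_range, mem_image]
    constructor
    · rintro ⟨hv, ⟨k, rfl⟩, h1, h2⟩
      refine ⟨k, ⟨?_, ?_⟩, rfl⟩
      · rw [← hmg] at hv; exact lt_of_mul_lt_mul_left hv (Nat.zero_le m)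
      · have h1' : g ∣ a₁ * k := (key d₁ k).1 (by exact_mod_cast h1)
        have h2' : g ∣ a₂ * k := (key d₂ k).1 (by exact_mod_cast h2)
        have : g ∣ Nat.gcd (a₁ * k) (a₂ * k) := Nat.dvd_gcd h1' h2'
        rw [Nat.gcd_mul_right] at this
        exact (aux_dvd_mul_iff_div_gcd_dvd hg).1 this
    · rintro ⟨k, ⟨hk, hks⟩, rfl⟩
      have hgk : g ∣ Nat.gcd a₁ a₂ * k := (aux_dvd_mul_iff_div_gcd_dvd hg).2 hks
      have h1' : g ∣ a₁ * k := hgk.trans (Nat.mul_dvd_mul_right (Nat.gcd_dvd_left a₁ a₂) k)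
      have h2' : g ∣ a₂ * k := hgk.trans (Nat.mul_dvd_mul_right (Nat.gcd_dvd_right a₁ a₂) k)
      exact ⟨by rw [← hmg]; exact (Nat.mul_lt_mul_left hm0).2 hk, ⟨k, rfl⟩,
        by exact_mod_cast (key d₁ k).2 h1', by exact_mod_cast (key d₂ k).2 h2'⟩
  rw [himg, Finset.card_image_of_injective _ (mul_right_injective₀ hm0.ne')]
  have hwg : w ∣ g := Nat.gcd_dvd_left _ _
  have hw0 : 0 < w := Nat.gcd_pos_of_pos_left _ hg
  have hgw0 : 0 < g / w := Nat.div_pos (Nat.le_of_dvd hg hwg) hw0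
  rw [aux_card_mult hgw0 (Nat.div_dvd_of_dvd hwg), Nat.div_div_self hwg hg.ne']
  rw [hw, ← Nat.gcd_assoc]

lemma aux_alpha_ne (hα : IsPrimitiveRoot α n) (hn : 0 < n) : α ≠ 0 := by
  intro h0
  have := hα.pow_eq_one
  rw [h0, zero_pow hn.ne'] at this
  exact zero_ne_one this

lemma aux_zpow_eq_zpow (hα : IsPrimitiveRoot α n) (hn : 0 < n) (a b : ℤ) :
    α ^ a = α ^ b ↔ (n:ℤ) ∣ a - b := by
  have hα0 := aux_alpha_ne hα hn
  rw [← hα.zpow_eq_one_iff_dvd, zpow_sub₀ hα0, div_eq_one_iff_eq (zpow_ne_zero _ hα0), eq_comm]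

lemma aux_odd_cast (h2 : (2:F) = 0) {k : ℕ} (hk : Odd k) : (k : F) = 1 := by
  obtain ⟨j, rfl⟩ := hk
  push_cast
  rw [h2]
  ring

lemma aux_dagger (hα : IsPrimitiveRoot α n) (hn : 0 < n) (h2 : (2:F) = 0) (hodd : Odd n)
    {p : ℕ} (hp : 0 < p) (hpn : p ∣ n) (l : ℤ) (u : ℕ) :
    ∑ t ∈ Finset.range n, (if (p:ℤ) ∣ ((t:ℤ) - l) then α ^ (t*u) else 0)
      = if (n/p) ∣ u then α ^ (l * (u:ℤ)) else 0 := by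
  classical
  have hα0 := aux_alpha_ne hα hn
  set m := n / p with hm
  have hpm : p * m = n := Nat.mul_div_cancel' hpn
  have hpm' : ((p:ℤ)) * m = n := by exact_mod_cast hpm
  have hm0 : 0 < m := Nat.div_pos (Nat.le_of_dvd hn hpn) hp
  set t₀ := (l % p).toNat with ht₀
  have hl0 : (0:ℤ) ≤ l % p := Int.emod_nonneg l (by exact_mod_cast hp.ne')
  have ht₀c : (t₀ : ℤ) = l % p := Int.toNat_of_nonneg hl0
  have ht₀p : t₀ < p := by
    have := Int.emod_lt_of_pos l (b := p) (by exact_mod_cast hp)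
    omega
  obtain ⟨k₀, hk₀⟩ : (p:ℤ) ∣ (t₀ : ℤ) - l := by
    rw [ht₀c, Int.emod_def]
    exact ⟨- (l / p), by ring⟩
  have hfil : (Finset.range n).filter (fun t : ℕ => (p:ℤ) ∣ ((t:ℤ) - l))
      = (Finset.range m).image (fun s => t₀ + s * p) := by
    ext t
    simp only [mem_filter, mem_range, mem_image]
    constructor
    · rintro ⟨htn, k, hk⟩
      have hd : (t:ℤ) = (t₀:ℤ) + (k - k₀) * p := by linear_combination hk - hk₀
      have htnn : (0:ℤ) ≤ (t:ℤ) := Int.natCast_nonneg t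
      have hp1 : (1:ℤ) ≤ (p:ℤ) := by exact_mod_cast hp
      have ht₀p' : ((t₀:ℤ)) < p := by exact_mod_cast ht₀p
      have htn' : (t:ℤ) < n := by exact_mod_cast htn
      have h0 : 0 ≤ k - k₀ := by
        by_contra hc
        push_neg at hc
        have hc' : k - k₀ ≤ -1 := by omega
        nlinarith
      have h1 : k - k₀ < m := by
        by_contra hc
        push_neg at hc
        have ht₀0 : (0:ℤ) ≤ (t₀:ℤ) := Int.natCast_nonneg t₀
        nlinarith
      refine ⟨(k - k₀).toNat, by omega, ?_⟩
      have : ((t₀ + (k-k₀).toNat * p : ℕ) : ℤ) = (t:ℤ) := by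
        push_cast
        rw [Int.toNat_of_nonneg h0]
        linarith [hd]
      exact_mod_cast this
    · rintro ⟨s, hs, rfl⟩
      constructor
      · calc t₀ + s * p < p + s * p := by omega
          _ = (s+1) * p := by ring
          _ ≤ m * p := Nat.mul_le_mul_right p (by omega)
          _ = n := by rw [mul_comm]; exact hpm
      · exact ⟨k₀ + s, by push_cast; linear_combination hk₀⟩
  have hinj : Set.InjOn (fun s => t₀ + s * p) (Finset.range m) := by
    intro a _ b _ hab
    simp only at hab
    exact Nat.eq_of_mul_eq_mul_right hp (Nat.add_left_cancel hab)
  rw [← Finset.sum_filter, hfil, Finset.sum_image hinj]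
  have hterm : ∀ s, α ^ ((t₀ + s * p) * u) = α ^ (t₀ * u) * (α ^ (p * u)) ^ s := by
    intro s
    rw [show (t₀ + s*p)*u = t₀*u + p*u*s by ring, pow_add, pow_mul α (p*u) s]
  rw [Finset.sum_congr rfl (fun s _ => hterm s), ← Finset.mul_sum]
  have hmodd : Odd m := by
    rcases Nat.even_or_odd m with he | ho
    · exact absurd hodd (Nat.not_odd_iff_even.mpr (hpm ▸ he.mul_left p))
    · exact ho
  by_cases hmu : m ∣ u
  · obtain ⟨u', rfl⟩ := hmu
    have hx1 : α ^ (p * (m * u')) = 1 := by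
      rw [show p * (m * u') = n * u' by rw [← hpm]; ring, pow_mul, hα.pow_eq_one, one_pow]
    rw [hx1, if_pos ⟨u', rfl⟩]
    simp only [one_pow, Finset.sum_const, Finset.card_range, nsmul_eq_mul,
      aux_odd_cast h2 hmodd, mul_one]
    rw [← zpow_natCast α (t₀ * (m * u'))]
    refine (aux_zpow_eq_zpow hα hn _ _).2 ⟨k₀ * u', ?_⟩
    push_cast
    linear_combination ((m:ℤ) * u') * hk₀ + ((k₀:ℤ) * u') * hpm'
  · have hx1 : α ^ (p * u) ≠ 1 := by
      intro h1
      rw [hα.pow_eq_one_iff_dvd] at h1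
      obtain ⟨c, hc⟩ := h1
      exact hmu ⟨c, Nat.eq_of_mul_eq_mul_left hp (by rw [hc, ← hpm]; ring)⟩
    have hgeo : (∑ s ∈ Finset.range m, (α ^ (p * u)) ^ s) * (α ^ (p*u) - 1) = 0 := by
      rw [geom_sum_mul, ← pow_mul, show p * u * m = n * u by rw [← hpm]; ring,
        pow_mul, hα.pow_eq_one, one_pow, sub_self]
    have hsum0 : (∑ s ∈ Finset.range m, (α ^ (p * u)) ^ s) = 0 := by
      rcases mul_eq_zero.1 hgeo with h | h
      · exact h
      · exact absurd (by linear_combination h) hx1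
    rw [hsum0, mul_zero, if_neg hmu]

lemma aux_mem_coset (hα : IsPrimitiveRoot α n) (hn : 0 < n)
    {p : ℕ} (hp : 0 < p) (hpn : p ∣ n) (l : ℤ) (t : ℕ) :
    α ^ t ∈ coset α n l p ↔ (p:ℤ) ∣ ((t:ℤ) - l) := by
  have hm0 : 0 < n / p := Nat.div_pos (Nat.le_of_dvd hn hpn) hp
  have hpm : p * (n / p) = n := Nat.mul_div_cancel' hpn
  have hpm' : ((p:ℤ)) * ((n/p : ℕ):ℤ) = n := by exact_mod_cast hpm
  constructor
  · rintro ⟨j, hj, he⟩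
    rw [← zpow_natCast α t] at he
    obtain ⟨c, hc⟩ := (aux_zpow_eq_zpow hα hn _ _).1 he
    obtain ⟨d, hd⟩ := hpn
    refine ⟨d * c + j, ?_⟩
    have : (n:ℤ) = p * d := by exact_mod_cast hd
    linear_combination hc + c * this
  · rintro ⟨k, hk⟩
    set m := n / p with hm
    have hml : (0:ℤ) < (m:ℤ) := by exact_mod_cast hm0
    refine ⟨(k % m).toNat, ?_, ?_⟩
    · have h1 : k % m < m := Int.emod_lt_of_pos k hml
      have h2 : 0 ≤ k % m := Int.emod_nonneg k hml.ne'
      omega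
    · rw [← zpow_natCast α t]
      refine (aux_zpow_eq_zpow hα hn _ _).2 ⟨k / m, ?_⟩
      have h2 : 0 ≤ k % m := Int.emod_nonneg k hml.ne'
      have h3 : ((k % m).toNat : ℤ) = k % m := Int.toNat_of_nonneg h2
      have h4 : (m:ℤ) * (k / m) + k % m = k := Int.mul_ediv_add_emod k m
      rw [h3]
      linear_combination hk - (p:ℤ) * h4 + (k / (m:ℤ)) * hpm'

lemma aux_pair_dvd {n p₁ p₂ v : ℕ} (h₁ : p₁ ∣ n) (h₂ : p₂ ∣ n)
    (hp₁ : 0 < p₁) (hp₂ : 0 < p₂) :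
    ((n/p₁ ∣ v) ∧ (n/p₂ ∣ v)) ↔ (n / (Nat.gcd p₁ p₂) ∣ v) := by
  rw [Nat.div_dvd_iff_dvd_mul h₁ hp₁, Nat.div_dvd_iff_dvd_mul h₂ hp₂,
    Nat.div_dvd_iff_dvd_mul (Nat.dvd_trans (Nat.gcd_dvd_left p₁ p₂) h₁)
      (Nat.gcd_pos_of_pos_left p₂ hp₁)]
  constructor
  · rintro ⟨ha, hb⟩
    have : n ∣ Nat.gcd (p₁ * v) (p₂ * v) := Nat.dvd_gcd ha hb
    rwa [Nat.gcd_mul_right] at this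
  · intro h
    exact ⟨h.trans (Nat.mul_dvd_mul_right (Nat.gcd_dvd_left p₁ p₂) v),
      h.trans (Nat.mul_dvd_mul_right (Nat.gcd_dvd_right p₁ p₂) v)⟩

end Aux

/-- a bound on the locality of a cyclic code whose defining set contains every
n-th root of unity lying in an odd number of three given cosets. -/
theorem stmt12 {F : Type*} [Field F] [Fintype F] (q n : ℕ) [NeZero n]
    (hq : Fintype.card F = q) (hq2 : ∃ e : ℕ, 0 < e ∧ q = 2 ^ e) (hn : n ∣ q - 1)
    (α : F) (hα : IsPrimitiveRoot α n)
    (p₁ p₂ p₃ : ℕ) (hp₁ : 0 < p₁) (hp₂ : 0 < p₂) (hp₃ : 0 < p₃)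
    (hp₁n : p₁ ∣ n) (hp₂n : p₂ ∣ n) (hp₃n : p₃ ∣ n)
    (l₁ l₂ l₃ : ℤ)
    (D : Submodule F (Fin n → F)) (hcyc : IsCyclicCode D)
    (hZ : ∀ γ : F, γ ^ n = 1 →
      Odd ((if γ ∈ coset α n l₁ p₁ then 1 else 0) + (if γ ∈ coset α n l₂ p₂ then 1 else 0)
          + (if γ ∈ coset α n l₃ p₃ then 1 else 0) : ℕ) →
      γ ∈ definingSet D) :
    ∃ r : ℕ, HasLocality D r ∧
      (r : ℤ) ≤ (p₁ : ℤ) + p₂ + p₃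
          - 2 * Nat.gcd (Nat.gcd p₁ p₂) (l₁ - l₂).natAbs
          - 2 * Nat.gcd (Nat.gcd p₁ p₃) (l₁ - l₃).natAbs
          - 2 * Nat.gcd (Nat.gcd p₂ p₃) (l₂ - l₃).natAbs
          + 4 * Nat.gcd (Nat.gcd (Nat.gcd (Nat.gcd p₁ p₂) p₃) (l₁ - l₂).natAbs)
              (l₂ - l₃).natAbs
          - 1 := by
  classical
  have hn0 : 0 < n := Nat.pos_of_ne_zero (NeZero.ne n)
  obtain ⟨e, he0, hqe⟩ := hq2
  have h2 : (2:F) = 0 := by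
    have hcast : ((Fintype.card F : ℕ) : F) = 0 := FiniteField.cast_card_eq_zero F
    rw [hq, hqe] at hcast
    push_cast at hcast
    exact (pow_eq_zero_iff he0.ne').mp hcast
  have hself : ∀ x : F, x + x = 0 := fun x => by rw [← two_mul, h2, zero_mul]
  have hnodd : Odd n := by
    rcases Nat.even_or_odd n with hev | hod
    · exfalso
      obtain ⟨c, hc⟩ : 2 ∣ 2^e := dvd_pow_self 2 he0.ne'
      obtain ⟨j, hj⟩ : 2 ∣ q - 1 := dvd_trans hev.two_dvd hn
      have hq2' : q = 2 * c := by rw [hqe, hc]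
      have h2e : 2 ≤ 2^e := by
        calc 2 = 2^1 := (pow_one 2).symm
          _ ≤ 2^e := Nat.pow_le_pow_right (by norm_num) he0
      omega
    · exact hod
  have hα0 : α ≠ 0 := aux_alpha_ne hα hn0
  -- the dual vector
  set Y : ℕ → F := fun t =>
    (if n/p₁ ∣ t then α ^ (l₁ * (t:ℤ)) else 0) + (if n/p₂ ∣ t then α ^ (l₂ * (t:ℤ)) else 0)
      + (if n/p₃ ∣ t then α ^ (l₃ * (t:ℤ)) else 0) with hYdef
  have hY0 : Y 0 = 1 := by
    rw [hYdef]
    simp only [dvd_zero, if_pos, Nat.cast_zero, mul_zero, zpow_zero]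
    rw [add_assoc, hself 1, add_zero]
  have hYmod : ∀ t, Y (t % n) = Y t := by
    intro t
    have hdm : ∀ p : ℕ, p ∣ n → ((n/p ∣ t % n) ↔ (n/p ∣ t)) :=
      fun p hp => Nat.dvd_mod_iff (Nat.div_dvd_of_dvd hp)
    have hzm : ∀ l : ℤ, α ^ (l * ((t % n : ℕ):ℤ)) = α ^ (l * (t:ℤ)) := by
      intro l
      refine (aux_zpow_eq_zpow hα hn0 _ _).2 ⟨-(l * ((t / n : ℕ):ℤ)), ?_⟩
      have h4 : ((n:ℤ)) * ((t / n : ℕ):ℤ) + ((t % n : ℕ):ℤ) = (t:ℤ) := by exact_mod_cast Nat.div_add_mod t n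
      linear_combination l * h4
    rw [hYdef]
    simp only [hdm p₁ hp₁n, hdm p₂ hp₂n, hdm p₃ hp₃n, hzm]
  -- orthogonality with all cyclic shifts
  have hTk : ∀ (p : ℕ), 0 < p → p ∣ n → ∀ (l : ℤ) (c : Fin n → F) (a : ℕ),
      (∑ j : Fin n, c j * (if n/p ∣ (j.val + a) then α ^ (l * ((j.val + a : ℕ):ℤ)) else 0))
        = ∑ t ∈ Finset.range n, (if (p:ℤ) ∣ ((t:ℤ) - l)
            then α^(t*a) * ∑ j : Fin n, c j * α^(t*j.val) else 0) := by
    intro p hp hpn l c a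
    have h1 : ∀ j : Fin n, (if n/p ∣ (j.val + a) then α ^ (l * ((j.val + a : ℕ):ℤ)) else 0)
        = ∑ t ∈ Finset.range n, (if (p:ℤ) ∣ ((t:ℤ) - l) then α^(t*(j.val+a)) else 0) :=
      fun j => (aux_dagger hα hn0 h2 hnodd hp hpn l (j.val+a)).symm
    calc (∑ j : Fin n, c j * (if n/p ∣ (j.val + a) then α ^ (l * ((j.val + a : ℕ):ℤ)) else 0))
        = ∑ j : Fin n, ∑ t ∈ Finset.range n,
            c j * (if (p:ℤ) ∣ ((t:ℤ) - l) then α^(t*(j.val+a)) else 0) := by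
          refine Finset.sum_congr rfl fun j _ => ?_
          rw [h1 j, Finset.mul_sum]
      _ = ∑ t ∈ Finset.range n, ∑ j : Fin n,
            c j * (if (p:ℤ) ∣ ((t:ℤ) - l) then α^(t*(j.val+a)) else 0) := Finset.sum_comm
      _ = ∑ t ∈ Finset.range n, (if (p:ℤ) ∣ ((t:ℤ) - l)
            then α^(t*a) * ∑ j : Fin n, c j * α^(t*j.val) else 0) := by
          refine Finset.sum_congr rfl fun t _ => ?_
          by_cases hP : (p:ℤ) ∣ ((t:ℤ) - l)
          · simp only [if_pos hP, Finset.mul_sum]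
            refine Finset.sum_congr rfl fun j _ => ?_
            rw [show t*(j.val+a) = t*j.val + t*a by ring, pow_add]
            ring
          · simp [if_neg hP]
  have horth : ∀ c ∈ D, ∀ a : ℕ, ∑ j : Fin n, c j * Y (j.val + a) = 0 := by
    intro c hc a
    have hexp : ∀ j : Fin n, c j * Y (j.val + a)
        = c j * (if n/p₁ ∣ (j.val+a) then α ^ (l₁ * ((j.val+a : ℕ):ℤ)) else 0)
          + c j * (if n/p₂ ∣ (j.val+a) then α ^ (l₂ * ((j.val+a:ℕ):ℤ)) else 0)
          + c j * (if n/p₃ ∣ (j.val+a) then α ^ (l₃ * ((j.val+a:ℕ):ℤ)) else 0) := by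
      intro j; rw [hYdef]; ring
    rw [Finset.sum_congr rfl (fun j _ => hexp j), Finset.sum_add_distrib, Finset.sum_add_distrib,
      hTk p₁ hp₁ hp₁n l₁, hTk p₂ hp₂ hp₂n l₂, hTk p₃ hp₃ hp₃n l₃,
      ← Finset.sum_add_distrib, ← Finset.sum_add_distrib]
    apply Finset.sum_eq_zero
    intro t ht
    set S : F := ∑ j : Fin n, c j * α ^ (t * j.val) with hS
    have hSzero : Odd ((if (p₁:ℤ) ∣ ((t:ℤ)-l₁) then 1 else 0)
        + (if (p₂:ℤ) ∣ ((t:ℤ)-l₂) then 1 else 0)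
        + (if (p₃:ℤ) ∣ ((t:ℤ)-l₃) then 1 else 0) : ℕ) → S = 0 := by
      intro hoddc
      have hγn : (α^t)^n = 1 := by
        rw [← pow_mul, mul_comm, pow_mul, hα.pow_eq_one, one_pow]
      have hoddc' : Odd ((if α^t ∈ coset α n l₁ p₁ then 1 else 0)
          + (if α^t ∈ coset α n l₂ p₂ then 1 else 0)
          + (if α^t ∈ coset α n l₃ p₃ then 1 else 0) : ℕ) := by
        simpa only [aux_mem_coset hα hn0 hp₁ hp₁n, aux_mem_coset hα hn0 hp₂ hp₂n,
          aux_mem_coset hα hn0 hp₃ hp₃n] using hoddc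
      have hd := (hZ (α^t) hγn hoddc').2 c hc
      rw [hS]
      calc ∑ j : Fin n, c j * α ^ (t * j.val)
          = ∑ j : Fin n, c j * (α^t) ^ (j.val : ℕ) := by
            refine Finset.sum_congr rfl fun j _ => by rw [← pow_mul]
        _ = 0 := hd
    by_cases h1 : (p₁:ℤ) ∣ ((t:ℤ)-l₁) <;> by_cases hb2 : (p₂:ℤ) ∣ ((t:ℤ)-l₂) <;>
      by_cases h3 : (p₃:ℤ) ∣ ((t:ℤ)-l₃)
    · have hX : S = 0 := hSzero (by simp [h1, hb2, h3]; decide)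
      simp [h1, hb2, h3, hX]
    · simp only [if_pos h1, if_pos hb2, if_neg h3, add_zero]
      exact hself _
    · simp only [if_pos h1, if_neg hb2, if_pos h3, add_zero, zero_add]
      exact hself _
    · have hX : S = 0 := hSzero (by simp [h1, hb2, h3])
      simp [h1, hb2, h3, hX]
    · simp only [if_neg h1, if_pos hb2, if_pos h3, zero_add]
      exact hself _
    · have hX : S = 0 := hSzero (by simp [h1, hb2, h3])
      simp [h1, hb2, h3, hX]
    · have hX : S = 0 := hSzero (by simp [h1, hb2, h3])
      simp [h1, hb2, h3, hX]
    · simp [h1, hb2, h3]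
  -- cardinality computations
  have hcard1 : ∀ p : ℕ, 0 < p → p ∣ n →
      (((Finset.range n).filter (fun v => n/p ∣ v)).card) = p := by
    intro p hp hpn
    have h := aux_countLemma hn0 hp hpn 0 0
    simp only [zero_mul, dvd_zero, and_true, Int.natAbs_zero, Nat.gcd_zero_right] at h
    exact h
  have hcardpair : ∀ (p p' : ℕ), 0 < p → 0 < p' → p ∣ n → p' ∣ n → ∀ l l' : ℤ,
      (((Finset.range n).filter
        (fun v => (n/p ∣ v ∧ n/p' ∣ v) ∧ α ^ (l * (v:ℤ)) = α ^ (l' * (v:ℤ)))).card)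
        = Nat.gcd (Nat.gcd p p') (l - l').natAbs := by
    intro p p' hp hp' hpn hp'n l l'
    have hgpos : 0 < Nat.gcd p p' := Nat.gcd_pos_of_pos_left p' hp
    have hgdvd : Nat.gcd p p' ∣ n := (Nat.gcd_dvd_left p p').trans hpn
    have heq : ∀ v ∈ Finset.range n,
        (((n/p ∣ v ∧ n/p' ∣ v) ∧ α ^ (l*(v:ℤ)) = α ^ (l'*(v:ℤ)))
          ↔ ((n/(Nat.gcd p p') ∣ v) ∧ ((n:ℤ) ∣ (l - l') * v) ∧ ((n:ℤ) ∣ 0 * v))) := by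
      intro v _
      rw [aux_pair_dvd hpn hp'n hp hp', aux_zpow_eq_zpow hα hn0]
      constructor
      · rintro ⟨hd, he⟩
        exact ⟨hd, by rw [sub_mul]; exact he, by simp⟩
      · rintro ⟨hd, he, -⟩
        exact ⟨hd, by rw [sub_mul] at he; exact he⟩
    rw [Finset.filter_congr heq, aux_countLemma hn0 hgpos hgdvd (l - l') 0,
      Int.natAbs_zero, Nat.gcd_zero_right]
  have hcardtrip :
      (((Finset.range n).filter
        (fun v => (n/p₁ ∣ v ∧ n/p₂ ∣ v ∧ n/p₃ ∣ v)
          ∧ α^(l₁*(v:ℤ)) = α^(l₂*(v:ℤ)) ∧ α^(l₂*(v:ℤ)) = α^(l₃*(v:ℤ)))).card)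
        = Nat.gcd (Nat.gcd (Nat.gcd (Nat.gcd p₁ p₂) p₃) (l₁-l₂).natAbs) (l₂-l₃).natAbs := by
    have hg12pos : 0 < Nat.gcd p₁ p₂ := Nat.gcd_pos_of_pos_left p₂ hp₁
    have hg12dvd : Nat.gcd p₁ p₂ ∣ n := (Nat.gcd_dvd_left p₁ p₂).trans hp₁n
    have hgpos : 0 < Nat.gcd (Nat.gcd p₁ p₂) p₃ := Nat.gcd_pos_of_pos_left p₃ hg12pos
    have hgdvd : Nat.gcd (Nat.gcd p₁ p₂) p₃ ∣ n := (Nat.gcd_dvd_left _ p₃).trans hg12dvd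
    have heq : ∀ v ∈ Finset.range n,
        (((n/p₁ ∣ v ∧ n/p₂ ∣ v ∧ n/p₃ ∣ v)
          ∧ α^(l₁*(v:ℤ)) = α^(l₂*(v:ℤ)) ∧ α^(l₂*(v:ℤ)) = α^(l₃*(v:ℤ)))
          ↔ ((n/(Nat.gcd (Nat.gcd p₁ p₂) p₃) ∣ v)
            ∧ ((n:ℤ) ∣ (l₁ - l₂) * v) ∧ ((n:ℤ) ∣ (l₂ - l₃) * v))) := by
      intro v _
      have hdvd3 : (n/p₁ ∣ v ∧ n/p₂ ∣ v ∧ n/p₃ ∣ v)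
          ↔ (n/(Nat.gcd (Nat.gcd p₁ p₂) p₃) ∣ v) := by
        rw [← and_assoc, aux_pair_dvd hp₁n hp₂n hp₁ hp₂,
          aux_pair_dvd hg12dvd hp₃n hg12pos hp₃]
      rw [hdvd3, aux_zpow_eq_zpow hα hn0, aux_zpow_eq_zpow hα hn0, sub_mul, sub_mul]
    rw [Finset.filter_congr heq, aux_countLemma hn0 hgpos hgdvd (l₁ - l₂) (l₂ - l₃)]
  -- the weight bound
  set B : ℤ := (p₁:ℤ) + p₂ + p₃
      - 2 * (Nat.gcd (Nat.gcd p₁ p₂) (l₁ - l₂).natAbs)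
      - 2 * (Nat.gcd (Nat.gcd p₁ p₃) (l₁ - l₃).natAbs)
      - 2 * (Nat.gcd (Nat.gcd p₂ p₃) (l₂ - l₃).natAbs)
      + 4 * (Nat.gcd (Nat.gcd (Nat.gcd (Nat.gcd p₁ p₂) p₃) (l₁ - l₂).natAbs) (l₂ - l₃).natAbs)
      with hB
  have hwt : (((Finset.range n).filter (fun v => Y v ≠ 0)).card : ℤ) ≤ B := by
    have hle : ∀ v ∈ Finset.range n, (if Y v ≠ 0 then (1:ℤ) else 0) ≤
        (if n/p₁ ∣ v then (1:ℤ) else 0) + (if n/p₂ ∣ v then (1:ℤ) else 0)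
          + (if n/p₃ ∣ v then (1:ℤ) else 0)
        - 2 * (if (n/p₁ ∣ v ∧ n/p₂ ∣ v) ∧ α^(l₁*(v:ℤ)) = α^(l₂*(v:ℤ)) then (1:ℤ) else 0)
        - 2 * (if (n/p₁ ∣ v ∧ n/p₃ ∣ v) ∧ α^(l₁*(v:ℤ)) = α^(l₃*(v:ℤ)) then (1:ℤ) else 0)
        - 2 * (if (n/p₂ ∣ v ∧ n/p₃ ∣ v) ∧ α^(l₂*(v:ℤ)) = α^(l₃*(v:ℤ)) then (1:ℤ) else 0)
        + 4 * (if (n/p₁ ∣ v ∧ n/p₂ ∣ v ∧ n/p₃ ∣ v)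
            ∧ α^(l₁*(v:ℤ)) = α^(l₂*(v:ℤ)) ∧ α^(l₂*(v:ℤ)) = α^(l₃*(v:ℤ)) then (1:ℤ) else 0) := by
      intro v _
      have hL1 : (if Y v ≠ 0 then (1:ℤ) else 0) ≤ 1 := by split_ifs <;> norm_num
      have hL0 : (0:ℤ) ≤ (if Y v ≠ 0 then (1:ℤ) else 0) := by split_ifs <;> norm_num
      by_cases h1 : n/p₁ ∣ v <;> by_cases hb2 : n/p₂ ∣ v <;> by_cases h3 : n/p₃ ∣ v
      · -- TTT
        by_cases e12 : α^(l₁*(v:ℤ)) = α^(l₂*(v:ℤ)) <;>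
          by_cases e23 : α^(l₂*(v:ℤ)) = α^(l₃*(v:ℤ))
        · have e13 := e12.trans e23
          have w1 : (if n/p₁ ∣ v then (1:ℤ) else 0) = 1 := if_pos h1
          have w2 : (if n/p₂ ∣ v then (1:ℤ) else 0) = 1 := if_pos hb2
          have w3 : (if n/p₃ ∣ v then (1:ℤ) else 0) = 1 := if_pos h3
          have w4 : (if (n/p₁ ∣ v ∧ n/p₂ ∣ v) ∧ α^(l₁*(v:ℤ)) = α^(l₂*(v:ℤ)) then (1:ℤ) else 0) = 1 := if_pos ⟨⟨h1,hb2⟩,e12⟩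
          have w5 : (if (n/p₁ ∣ v ∧ n/p₃ ∣ v) ∧ α^(l₁*(v:ℤ)) = α^(l₃*(v:ℤ)) then (1:ℤ) else 0) = 1 := if_pos ⟨⟨h1,h3⟩,e13⟩
          have w6 : (if (n/p₂ ∣ v ∧ n/p₃ ∣ v) ∧ α^(l₂*(v:ℤ)) = α^(l₃*(v:ℤ)) then (1:ℤ) else 0) = 1 := if_pos ⟨⟨hb2,h3⟩,e23⟩
          have w7 : (if (n/p₁ ∣ v ∧ n/p₂ ∣ v ∧ n/p₃ ∣ v) ∧ α^(l₁*(v:ℤ)) = α^(l₂*(v:ℤ)) ∧ α^(l₂*(v:ℤ)) = α^(l₃*(v:ℤ)) then (1:ℤ) else 0) = 1 := if_pos ⟨⟨h1,hb2,h3⟩,e12,e23⟩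
          rw [w1, w2, w3, w4, w5, w6, w7]
          split_ifs <;> norm_num
        · have he13 : ¬(α^(l₁*(v:ℤ)) = α^(l₃*(v:ℤ))) := fun h => e23 (e12.symm.trans h)
          have w1 : (if n/p₁ ∣ v then (1:ℤ) else 0) = 1 := if_pos h1
          have w2 : (if n/p₂ ∣ v then (1:ℤ) else 0) = 1 := if_pos hb2
          have w3 : (if n/p₃ ∣ v then (1:ℤ) else 0) = 1 := if_pos h3
          have w4 : (if (n/p₁ ∣ v ∧ n/p₂ ∣ v) ∧ α^(l₁*(v:ℤ)) = α^(l₂*(v:ℤ)) then (1:ℤ) else 0) = 1 := if_pos ⟨⟨h1,hb2⟩,e12⟩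
          have w5 : (if (n/p₁ ∣ v ∧ n/p₃ ∣ v) ∧ α^(l₁*(v:ℤ)) = α^(l₃*(v:ℤ)) then (1:ℤ) else 0) = 0 := if_neg (fun hh => he13 hh.2)
          have w6 : (if (n/p₂ ∣ v ∧ n/p₃ ∣ v) ∧ α^(l₂*(v:ℤ)) = α^(l₃*(v:ℤ)) then (1:ℤ) else 0) = 0 := if_neg (fun hh => e23 hh.2)
          have w7 : (if (n/p₁ ∣ v ∧ n/p₂ ∣ v ∧ n/p₃ ∣ v) ∧ α^(l₁*(v:ℤ)) = α^(l₂*(v:ℤ)) ∧ α^(l₂*(v:ℤ)) = α^(l₃*(v:ℤ)) then (1:ℤ) else 0) = 0 := if_neg (fun hh => e23 hh.2.2)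
          rw [w1, w2, w3, w4, w5, w6, w7]
          split_ifs <;> norm_num
        · have he13 : ¬(α^(l₁*(v:ℤ)) = α^(l₃*(v:ℤ))) := fun h => e12 (h.trans e23.symm)
          have w1 : (if n/p₁ ∣ v then (1:ℤ) else 0) = 1 := if_pos h1
          have w2 : (if n/p₂ ∣ v then (1:ℤ) else 0) = 1 := if_pos hb2
          have w3 : (if n/p₃ ∣ v then (1:ℤ) else 0) = 1 := if_pos h3
          have w4 : (if (n/p₁ ∣ v ∧ n/p₂ ∣ v) ∧ α^(l₁*(v:ℤ)) = α^(l₂*(v:ℤ)) then (1:ℤ) else 0) = 0 := if_neg (fun hh => e12 hh.2)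
          have w5 : (if (n/p₁ ∣ v ∧ n/p₃ ∣ v) ∧ α^(l₁*(v:ℤ)) = α^(l₃*(v:ℤ)) then (1:ℤ) else 0) = 0 := if_neg (fun hh => he13 hh.2)
          have w6 : (if (n/p₂ ∣ v ∧ n/p₃ ∣ v) ∧ α^(l₂*(v:ℤ)) = α^(l₃*(v:ℤ)) then (1:ℤ) else 0) = 1 := if_pos ⟨⟨hb2,h3⟩,e23⟩
          have w7 : (if (n/p₁ ∣ v ∧ n/p₂ ∣ v ∧ n/p₃ ∣ v) ∧ α^(l₁*(v:ℤ)) = α^(l₂*(v:ℤ)) ∧ α^(l₂*(v:ℤ)) = α^(l₃*(v:ℤ)) then (1:ℤ) else 0) = 0 := if_neg (fun hh => e12 hh.2.1)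
          rw [w1, w2, w3, w4, w5, w6, w7]
          split_ifs <;> norm_num
        · by_cases e13 : α^(l₁*(v:ℤ)) = α^(l₃*(v:ℤ))
          ·
            have w1 : (if n/p₁ ∣ v then (1:ℤ) else 0) = 1 := if_pos h1
            have w2 : (if n/p₂ ∣ v then (1:ℤ) else 0) = 1 := if_pos hb2
            have w3 : (if n/p₃ ∣ v then (1:ℤ) else 0) = 1 := if_pos h3
            have w4 : (if (n/p₁ ∣ v ∧ n/p₂ ∣ v) ∧ α^(l₁*(v:ℤ)) = α^(l₂*(v:ℤ)) then (1:ℤ) else 0) = 0 := if_neg (fun hh => e12 hh.2)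
            have w5 : (if (n/p₁ ∣ v ∧ n/p₃ ∣ v) ∧ α^(l₁*(v:ℤ)) = α^(l₃*(v:ℤ)) then (1:ℤ) else 0) = 1 := if_pos ⟨⟨h1,h3⟩,e13⟩
            have w6 : (if (n/p₂ ∣ v ∧ n/p₃ ∣ v) ∧ α^(l₂*(v:ℤ)) = α^(l₃*(v:ℤ)) then (1:ℤ) else 0) = 0 := if_neg (fun hh => e23 hh.2)
            have w7 : (if (n/p₁ ∣ v ∧ n/p₂ ∣ v ∧ n/p₃ ∣ v) ∧ α^(l₁*(v:ℤ)) = α^(l₂*(v:ℤ)) ∧ α^(l₂*(v:ℤ)) = α^(l₃*(v:ℤ)) then (1:ℤ) else 0) = 0 := if_neg (fun hh => e12 hh.2.1)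
            rw [w1, w2, w3, w4, w5, w6, w7]
            split_ifs <;> norm_num
          ·
            have w1 : (if n/p₁ ∣ v then (1:ℤ) else 0) = 1 := if_pos h1
            have w2 : (if n/p₂ ∣ v then (1:ℤ) else 0) = 1 := if_pos hb2
            have w3 : (if n/p₃ ∣ v then (1:ℤ) else 0) = 1 := if_pos h3
            have w4 : (if (n/p₁ ∣ v ∧ n/p₂ ∣ v) ∧ α^(l₁*(v:ℤ)) = α^(l₂*(v:ℤ)) then (1:ℤ) else 0) = 0 := if_neg (fun hh => e12 hh.2)
            have w5 : (if (n/p₁ ∣ v ∧ n/p₃ ∣ v) ∧ α^(l₁*(v:ℤ)) = α^(l₃*(v:ℤ)) then (1:ℤ) else 0) = 0 := if_neg (fun hh => e13 hh.2)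
            have w6 : (if (n/p₂ ∣ v ∧ n/p₃ ∣ v) ∧ α^(l₂*(v:ℤ)) = α^(l₃*(v:ℤ)) then (1:ℤ) else 0) = 0 := if_neg (fun hh => e23 hh.2)
            have w7 : (if (n/p₁ ∣ v ∧ n/p₂ ∣ v ∧ n/p₃ ∣ v) ∧ α^(l₁*(v:ℤ)) = α^(l₂*(v:ℤ)) ∧ α^(l₂*(v:ℤ)) = α^(l₃*(v:ℤ)) then (1:ℤ) else 0) = 0 := if_neg (fun hh => e12 hh.2.1)
            rw [w1, w2, w3, w4, w5, w6, w7]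
            split_ifs <;> norm_num
      · -- TTF
        by_cases e12 : α^(l₁*(v:ℤ)) = α^(l₂*(v:ℤ))
        ·
          have w1 : (if n/p₁ ∣ v then (1:ℤ) else 0) = 1 := if_pos h1
          have w2 : (if n/p₂ ∣ v then (1:ℤ) else 0) = 1 := if_pos hb2
          have w3 : (if n/p₃ ∣ v then (1:ℤ) else 0) = 0 := if_neg (h3)
          have w4 : (if (n/p₁ ∣ v ∧ n/p₂ ∣ v) ∧ α^(l₁*(v:ℤ)) = α^(l₂*(v:ℤ)) then (1:ℤ) else 0) = 1 := if_pos ⟨⟨h1,hb2⟩,e12⟩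
          have w5 : (if (n/p₁ ∣ v ∧ n/p₃ ∣ v) ∧ α^(l₁*(v:ℤ)) = α^(l₃*(v:ℤ)) then (1:ℤ) else 0) = 0 := if_neg (fun hh => h3 hh.1.2)
          have w6 : (if (n/p₂ ∣ v ∧ n/p₃ ∣ v) ∧ α^(l₂*(v:ℤ)) = α^(l₃*(v:ℤ)) then (1:ℤ) else 0) = 0 := if_neg (fun hh => h3 hh.1.2)
          have w7 : (if (n/p₁ ∣ v ∧ n/p₂ ∣ v ∧ n/p₃ ∣ v) ∧ α^(l₁*(v:ℤ)) = α^(l₂*(v:ℤ)) ∧ α^(l₂*(v:ℤ)) = α^(l₃*(v:ℤ)) then (1:ℤ) else 0) = 0 := if_neg (fun hh => h3 hh.1.2.2)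
          have hYv : Y v = 0 := by
            rw [hYdef]
            simp only [if_pos h1, if_pos hb2, if_neg h3, add_zero]
            rw [e12]
            exact hself _
          rw [if_neg (not_not_intro hYv), w1, w2, w3, w4, w5, w6, w7]
          norm_num
        ·
          have w1 : (if n/p₁ ∣ v then (1:ℤ) else 0) = 1 := if_pos h1
          have w2 : (if n/p₂ ∣ v then (1:ℤ) else 0) = 1 := if_pos hb2
          have w3 : (if n/p₃ ∣ v then (1:ℤ) else 0) = 0 := if_neg (h3)
          have w4 : (if (n/p₁ ∣ v ∧ n/p₂ ∣ v) ∧ α^(l₁*(v:ℤ)) = α^(l₂*(v:ℤ)) then (1:ℤ) else 0) = 0 := if_neg (fun hh => e12 hh.2)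
          have w5 : (if (n/p₁ ∣ v ∧ n/p₃ ∣ v) ∧ α^(l₁*(v:ℤ)) = α^(l₃*(v:ℤ)) then (1:ℤ) else 0) = 0 := if_neg (fun hh => h3 hh.1.2)
          have w6 : (if (n/p₂ ∣ v ∧ n/p₃ ∣ v) ∧ α^(l₂*(v:ℤ)) = α^(l₃*(v:ℤ)) then (1:ℤ) else 0) = 0 := if_neg (fun hh => h3 hh.1.2)
          have w7 : (if (n/p₁ ∣ v ∧ n/p₂ ∣ v ∧ n/p₃ ∣ v) ∧ α^(l₁*(v:ℤ)) = α^(l₂*(v:ℤ)) ∧ α^(l₂*(v:ℤ)) = α^(l₃*(v:ℤ)) then (1:ℤ) else 0) = 0 := if_neg (fun hh => h3 hh.1.2.2)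
          rw [w1, w2, w3, w4, w5, w6, w7]
          split_ifs <;> norm_num
      · -- TFT
        by_cases e13 : α^(l₁*(v:ℤ)) = α^(l₃*(v:ℤ))
        ·
          have w1 : (if n/p₁ ∣ v then (1:ℤ) else 0) = 1 := if_pos h1
          have w2 : (if n/p₂ ∣ v then (1:ℤ) else 0) = 0 := if_neg (hb2)
          have w3 : (if n/p₃ ∣ v then (1:ℤ) else 0) = 1 := if_pos h3
          have w4 : (if (n/p₁ ∣ v ∧ n/p₂ ∣ v) ∧ α^(l₁*(v:ℤ)) = α^(l₂*(v:ℤ)) then (1:ℤ) else 0) = 0 := if_neg (fun hh => hb2 hh.1.2)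
          have w5 : (if (n/p₁ ∣ v ∧ n/p₃ ∣ v) ∧ α^(l₁*(v:ℤ)) = α^(l₃*(v:ℤ)) then (1:ℤ) else 0) = 1 := if_pos ⟨⟨h1,h3⟩,e13⟩
          have w6 : (if (n/p₂ ∣ v ∧ n/p₃ ∣ v) ∧ α^(l₂*(v:ℤ)) = α^(l₃*(v:ℤ)) then (1:ℤ) else 0) = 0 := if_neg (fun hh => hb2 hh.1.1)
          have w7 : (if (n/p₁ ∣ v ∧ n/p₂ ∣ v ∧ n/p₃ ∣ v) ∧ α^(l₁*(v:ℤ)) = α^(l₂*(v:ℤ)) ∧ α^(l₂*(v:ℤ)) = α^(l₃*(v:ℤ)) then (1:ℤ) else 0) = 0 := if_neg (fun hh => hb2 hh.1.2.1)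
          have hYv : Y v = 0 := by
            rw [hYdef]
            simp only [if_pos h1, if_neg hb2, if_pos h3, add_zero]
            rw [e13]
            exact hself _
          rw [if_neg (not_not_intro hYv), w1, w2, w3, w4, w5, w6, w7]
          norm_num
        ·
          have w1 : (if n/p₁ ∣ v then (1:ℤ) else 0) = 1 := if_pos h1
          have w2 : (if n/p₂ ∣ v then (1:ℤ) else 0) = 0 := if_neg (hb2)
          have w3 : (if n/p₃ ∣ v then (1:ℤ) else 0) = 1 := if_pos h3
          have w4 : (if (n/p₁ ∣ v ∧ n/p₂ ∣ v) ∧ α^(l₁*(v:ℤ)) = α^(l₂*(v:ℤ)) then (1:ℤ) else 0) = 0 := if_neg (fun hh => hb2 hh.1.2)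
          have w5 : (if (n/p₁ ∣ v ∧ n/p₃ ∣ v) ∧ α^(l₁*(v:ℤ)) = α^(l₃*(v:ℤ)) then (1:ℤ) else 0) = 0 := if_neg (fun hh => e13 hh.2)
          have w6 : (if (n/p₂ ∣ v ∧ n/p₃ ∣ v) ∧ α^(l₂*(v:ℤ)) = α^(l₃*(v:ℤ)) then (1:ℤ) else 0) = 0 := if_neg (fun hh => hb2 hh.1.1)
          have w7 : (if (n/p₁ ∣ v ∧ n/p₂ ∣ v ∧ n/p₃ ∣ v) ∧ α^(l₁*(v:ℤ)) = α^(l₂*(v:ℤ)) ∧ α^(l₂*(v:ℤ)) = α^(l₃*(v:ℤ)) then (1:ℤ) else 0) = 0 := if_neg (fun hh => hb2 hh.1.2.1)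
          rw [w1, w2, w3, w4, w5, w6, w7]
          split_ifs <;> norm_num
      · -- TFF
        have w1 : (if n/p₁ ∣ v then (1:ℤ) else 0) = 1 := if_pos h1
        have w2 : (if n/p₂ ∣ v then (1:ℤ) else 0) = 0 := if_neg (hb2)
        have w3 : (if n/p₃ ∣ v then (1:ℤ) else 0) = 0 := if_neg (h3)
        have w4 : (if (n/p₁ ∣ v ∧ n/p₂ ∣ v) ∧ α^(l₁*(v:ℤ)) = α^(l₂*(v:ℤ)) then (1:ℤ) else 0) = 0 := if_neg (fun hh => hb2 hh.1.2)
        have w5 : (if (n/p₁ ∣ v ∧ n/p₃ ∣ v) ∧ α^(l₁*(v:ℤ)) = α^(l₃*(v:ℤ)) then (1:ℤ) else 0) = 0 := if_neg (fun hh => h3 hh.1.2)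
        have w6 : (if (n/p₂ ∣ v ∧ n/p₃ ∣ v) ∧ α^(l₂*(v:ℤ)) = α^(l₃*(v:ℤ)) then (1:ℤ) else 0) = 0 := if_neg (fun hh => hb2 hh.1.1)
        have w7 : (if (n/p₁ ∣ v ∧ n/p₂ ∣ v ∧ n/p₃ ∣ v) ∧ α^(l₁*(v:ℤ)) = α^(l₂*(v:ℤ)) ∧ α^(l₂*(v:ℤ)) = α^(l₃*(v:ℤ)) then (1:ℤ) else 0) = 0 := if_neg (fun hh => hb2 hh.1.2.1)
        rw [w1, w2, w3, w4, w5, w6, w7]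
        split_ifs <;> norm_num
      · -- FTT
        by_cases e23 : α^(l₂*(v:ℤ)) = α^(l₃*(v:ℤ))
        ·
          have w1 : (if n/p₁ ∣ v then (1:ℤ) else 0) = 0 := if_neg (h1)
          have w2 : (if n/p₂ ∣ v then (1:ℤ) else 0) = 1 := if_pos hb2
          have w3 : (if n/p₃ ∣ v then (1:ℤ) else 0) = 1 := if_pos h3
          have w4 : (if (n/p₁ ∣ v ∧ n/p₂ ∣ v) ∧ α^(l₁*(v:ℤ)) = α^(l₂*(v:ℤ)) then (1:ℤ) else 0) = 0 := if_neg (fun hh => h1 hh.1.1)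
          have w5 : (if (n/p₁ ∣ v ∧ n/p₃ ∣ v) ∧ α^(l₁*(v:ℤ)) = α^(l₃*(v:ℤ)) then (1:ℤ) else 0) = 0 := if_neg (fun hh => h1 hh.1.1)
          have w6 : (if (n/p₂ ∣ v ∧ n/p₃ ∣ v) ∧ α^(l₂*(v:ℤ)) = α^(l₃*(v:ℤ)) then (1:ℤ) else 0) = 1 := if_pos ⟨⟨hb2,h3⟩,e23⟩
          have w7 : (if (n/p₁ ∣ v ∧ n/p₂ ∣ v ∧ n/p₃ ∣ v) ∧ α^(l₁*(v:ℤ)) = α^(l₂*(v:ℤ)) ∧ α^(l₂*(v:ℤ)) = α^(l₃*(v:ℤ)) then (1:ℤ) else 0) = 0 := if_neg (fun hh => h1 hh.1.1)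
          have hYv : Y v = 0 := by
            rw [hYdef]
            simp only [if_neg h1, if_pos hb2, if_pos h3, zero_add]
            rw [e23]
            exact hself _
          rw [if_neg (not_not_intro hYv), w1, w2, w3, w4, w5, w6, w7]
          norm_num
        ·
          have w1 : (if n/p₁ ∣ v then (1:ℤ) else 0) = 0 := if_neg (h1)
          have w2 : (if n/p₂ ∣ v then (1:ℤ) else 0) = 1 := if_pos hb2
          have w3 : (if n/p₃ ∣ v then (1:ℤ) else 0) = 1 := if_pos h3
          have w4 : (if (n/p₁ ∣ v ∧ n/p₂ ∣ v) ∧ α^(l₁*(v:ℤ)) = α^(l₂*(v:ℤ)) then (1:ℤ) else 0) = 0 := if_neg (fun hh => h1 hh.1.1)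
          have w5 : (if (n/p₁ ∣ v ∧ n/p₃ ∣ v) ∧ α^(l₁*(v:ℤ)) = α^(l₃*(v:ℤ)) then (1:ℤ) else 0) = 0 := if_neg (fun hh => h1 hh.1.1)
          have w6 : (if (n/p₂ ∣ v ∧ n/p₃ ∣ v) ∧ α^(l₂*(v:ℤ)) = α^(l₃*(v:ℤ)) then (1:ℤ) else 0) = 0 := if_neg (fun hh => e23 hh.2)
          have w7 : (if (n/p₁ ∣ v ∧ n/p₂ ∣ v ∧ n/p₃ ∣ v) ∧ α^(l₁*(v:ℤ)) = α^(l₂*(v:ℤ)) ∧ α^(l₂*(v:ℤ)) = α^(l₃*(v:ℤ)) then (1:ℤ) else 0) = 0 := if_neg (fun hh => h1 hh.1.1)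
          rw [w1, w2, w3, w4, w5, w6, w7]
          split_ifs <;> norm_num
      · -- FTF
        have w1 : (if n/p₁ ∣ v then (1:ℤ) else 0) = 0 := if_neg (h1)
        have w2 : (if n/p₂ ∣ v then (1:ℤ) else 0) = 1 := if_pos hb2
        have w3 : (if n/p₃ ∣ v then (1:ℤ) else 0) = 0 := if_neg (h3)
        have w4 : (if (n/p₁ ∣ v ∧ n/p₂ ∣ v) ∧ α^(l₁*(v:ℤ)) = α^(l₂*(v:ℤ)) then (1:ℤ) else 0) = 0 := if_neg (fun hh => h1 hh.1.1)
        have w5 : (if (n/p₁ ∣ v ∧ n/p₃ ∣ v) ∧ α^(l₁*(v:ℤ)) = α^(l₃*(v:ℤ)) then (1:ℤ) else 0) = 0 := if_neg (fun hh => h1 hh.1.1)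
        have w6 : (if (n/p₂ ∣ v ∧ n/p₃ ∣ v) ∧ α^(l₂*(v:ℤ)) = α^(l₃*(v:ℤ)) then (1:ℤ) else 0) = 0 := if_neg (fun hh => h3 hh.1.2)
        have w7 : (if (n/p₁ ∣ v ∧ n/p₂ ∣ v ∧ n/p₃ ∣ v) ∧ α^(l₁*(v:ℤ)) = α^(l₂*(v:ℤ)) ∧ α^(l₂*(v:ℤ)) = α^(l₃*(v:ℤ)) then (1:ℤ) else 0) = 0 := if_neg (fun hh => h1 hh.1.1)
        rw [w1, w2, w3, w4, w5, w6, w7]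
        split_ifs <;> norm_num
      · -- FFT
        have w1 : (if n/p₁ ∣ v then (1:ℤ) else 0) = 0 := if_neg (h1)
        have w2 : (if n/p₂ ∣ v then (1:ℤ) else 0) = 0 := if_neg (hb2)
        have w3 : (if n/p₃ ∣ v then (1:ℤ) else 0) = 1 := if_pos h3
        have w4 : (if (n/p₁ ∣ v ∧ n/p₂ ∣ v) ∧ α^(l₁*(v:ℤ)) = α^(l₂*(v:ℤ)) then (1:ℤ) else 0) = 0 := if_neg (fun hh => h1 hh.1.1)
        have w5 : (if (n/p₁ ∣ v ∧ n/p₃ ∣ v) ∧ α^(l₁*(v:ℤ)) = α^(l₃*(v:ℤ)) then (1:ℤ) else 0) = 0 := if_neg (fun hh => h1 hh.1.1)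
        have w6 : (if (n/p₂ ∣ v ∧ n/p₃ ∣ v) ∧ α^(l₂*(v:ℤ)) = α^(l₃*(v:ℤ)) then (1:ℤ) else 0) = 0 := if_neg (fun hh => hb2 hh.1.1)
        have w7 : (if (n/p₁ ∣ v ∧ n/p₂ ∣ v ∧ n/p₃ ∣ v) ∧ α^(l₁*(v:ℤ)) = α^(l₂*(v:ℤ)) ∧ α^(l₂*(v:ℤ)) = α^(l₃*(v:ℤ)) then (1:ℤ) else 0) = 0 := if_neg (fun hh => h1 hh.1.1)
        rw [w1, w2, w3, w4, w5, w6, w7]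
        split_ifs <;> norm_num
      · -- FFF
        have w1 : (if n/p₁ ∣ v then (1:ℤ) else 0) = 0 := if_neg (h1)
        have w2 : (if n/p₂ ∣ v then (1:ℤ) else 0) = 0 := if_neg (hb2)
        have w3 : (if n/p₃ ∣ v then (1:ℤ) else 0) = 0 := if_neg (h3)
        have w4 : (if (n/p₁ ∣ v ∧ n/p₂ ∣ v) ∧ α^(l₁*(v:ℤ)) = α^(l₂*(v:ℤ)) then (1:ℤ) else 0) = 0 := if_neg (fun hh => h1 hh.1.1)
        have w5 : (if (n/p₁ ∣ v ∧ n/p₃ ∣ v) ∧ α^(l₁*(v:ℤ)) = α^(l₃*(v:ℤ)) then (1:ℤ) else 0) = 0 := if_neg (fun hh => h1 hh.1.1)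
        have w6 : (if (n/p₂ ∣ v ∧ n/p₃ ∣ v) ∧ α^(l₂*(v:ℤ)) = α^(l₃*(v:ℤ)) then (1:ℤ) else 0) = 0 := if_neg (fun hh => hb2 hh.1.1)
        have w7 : (if (n/p₁ ∣ v ∧ n/p₂ ∣ v ∧ n/p₃ ∣ v) ∧ α^(l₁*(v:ℤ)) = α^(l₂*(v:ℤ)) ∧ α^(l₂*(v:ℤ)) = α^(l₃*(v:ℤ)) then (1:ℤ) else 0) = 0 := if_neg (fun hh => h1 hh.1.1)
        have hYv : Y v = 0 := by
          rw [hYdef]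
          simp only [if_neg h1, if_neg hb2, if_neg h3, add_zero]
        rw [if_neg (not_not_intro hYv), w1, w2, w3, w4, w5, w6, w7]
        norm_num
    calc (((Finset.range n).filter (fun v => Y v ≠ 0)).card : ℤ)
        = ∑ v ∈ Finset.range n, (if Y v ≠ 0 then (1:ℤ) else 0) := by rw [Finset.sum_boole]
      _ ≤ _ := Finset.sum_le_sum hle
      _ = B := by
          simp only [Finset.sum_add_distrib, Finset.sum_sub_distrib, ← Finset.mul_sum]
          rw [Finset.sum_boole, Finset.sum_boole, Finset.sum_boole, Finset.sum_boole,
            Finset.sum_boole, Finset.sum_boole, Finset.sum_boole,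
            hcard1 p₁ hp₁ hp₁n, hcard1 p₂ hp₂ hp₂n, hcard1 p₃ hp₃ hp₃n,
            hcardpair p₁ p₂ hp₁ hp₂ hp₁n hp₂n l₁ l₂,
            hcardpair p₁ p₃ hp₁ hp₃ hp₁n hp₃n l₁ l₃,
            hcardpair p₂ p₃ hp₂ hp₃ hp₂n hp₃n l₂ l₃, hcardtrip, hB]
  -- assemble
  set Nw := ((Finset.range n).filter (fun v => Y v ≠ 0)).card with hNw
  have hNw1 : 1 ≤ Nw := by
    rw [hNw]
    refine Finset.card_pos.2 ⟨0, ?_⟩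
    simp only [Finset.mem_filter, Finset.mem_range]
    exact ⟨hn0, by rw [hY0]; exact one_ne_zero⟩
  refine ⟨Nw - 1, ?_, ?_⟩
  · -- HasLocality
    intro i
    have hsub : ∀ j : Fin n, (j - i).val = (n - i.val + j.val) % n := fun j => by
      rw [Fin.sub_def]
    have hsh : ∀ j : Fin n, Y ((j - i : Fin n).val) = Y (j.val + (n - i.val)) := by
      intro j
      rw [hsub j, hYmod, Nat.add_comm]
    have hii : Y ((i - i : Fin n).val) = 1 := by
      rw [sub_self, Fin.val_zero, hY0]
    set A : Finset (Fin n) :=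
      (Finset.univ.filter (fun j : Fin n => Y ((j - i : Fin n).val) ≠ 0)).erase i with hA
    have hiF : i ∈ Finset.univ.filter (fun j : Fin n => Y ((j - i : Fin n).val) ≠ 0) := by
      simp only [Finset.mem_filter, Finset.mem_univ, true_and]
      rw [hii]
      exact one_ne_zero
    have hcardfil : (Finset.univ.filter (fun j : Fin n => Y ((j - i : Fin n).val) ≠ 0)).card
        = Nw := by
      rw [hNw]
      refine Finset.card_bij' (fun (j : Fin n) _ => (j - i).val)
        (fun t ht => (⟨t, Finset.mem_range.1 (Finset.mem_filter.1 ht).1⟩ : Fin n) + i)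
        ?_ ?_ ?_ ?_
      · intro a ha
        simp only [Finset.mem_filter, Finset.mem_univ, true_and] at ha
        simp only [Finset.mem_filter, Finset.mem_range]
        exact ⟨(a - i).is_lt, ha⟩
      · intro t ht
        simp only [Finset.mem_filter, Finset.mem_univ, true_and]
        have h1 := (Finset.mem_filter.1 ht).2
        rw [add_sub_cancel_right]
        simpa using h1
      · intro a ha
        show (a - i) + i = a
        exact sub_add_cancel a i
      · intro t ht
        simp only [add_sub_cancel_right]
    have hcardA : A.card = Nw - 1 := by
      rw [hA, Finset.card_erase_of_mem hiF, hcardfil]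
    refine ⟨A, le_of_eq hcardA, Finset.notMem_erase i _, ?_⟩
    refine ⟨fun w => - ∑ j : {x // x ∈ A}, Y (((j : Fin n) - i).val) * w j, ?_⟩
    intro c hc
    have h0 := horth c hc (n - i.val)
    have h0' : ∑ j : Fin n, c j * Y ((j - i : Fin n).val) = 0 := by
      rw [Finset.sum_congr rfl (fun j _ => by rw [hsh j])]
      exact h0
    have hins : Finset.univ.filter (fun j : Fin n => Y ((j - i : Fin n).val) ≠ 0)
        = insert i A := (Finset.insert_erase hiF).symm
    have hsplit : ∑ j : Fin n, c j * Y ((j - i : Fin n).val)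
        = c i * Y ((i - i : Fin n).val) + ∑ j ∈ A, c j * Y ((j - i : Fin n).val) := by
      rw [← Finset.sum_filter_of_ne (p := fun j : Fin n => Y ((j - i : Fin n).val) ≠ 0)
        (fun x _ hx => fun h0x => hx (by rw [h0x, mul_zero])),
        hins, Finset.sum_insert (Finset.notMem_erase i _)]
    rw [hsplit, hii, mul_one] at h0'
    have hci : c i = - ∑ j ∈ A, c j * Y ((j - i : Fin n).val) :=
      eq_neg_of_add_eq_zero_left h0'
    rw [hci]
    congr 1
    rw [Finset.sum_coe_sort A (fun j => Y ((j - i : Fin n).val) * c j)]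
    exact Finset.sum_congr rfl (fun j _ => by ring)
  · -- numeric bound
    have hc1 : ((Nw - 1 : ℕ) : ℤ) = (Nw : ℤ) - 1 := by
      omega
    rw [hc1]
    linarith [hwt]

end LRC
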